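/- A compactum X is an AANR if and only if the following holds: for every compactum Y, every topological embedding θ : X → Y, and every decreasing sequence Y₁ ⊇ Y₂ ⊇ ⋯ of closed subsets of Y with ⋂ₙ Yₙ = θ(X), there exists a sequence of continuous functions rₙ : Yₙ → X such that rₙ(θ(x)) → x uniformly over x ∈ X (uniform convergence with respect to some, equivalently any, compatible metric on X). -/

import Mathlib

open Topology

universe u v w

/-- Uniform continuity of the inverse of an embedding of a compact metric space. -/
lemma aanr_aux_inv {X : Type u} {Y : Type v} [MetricSpace X] [CompactSpace X] [MetricSpace Y]
    (θ : X → Y) (hθ : IsEmbedding θ) :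
    ∀ ε > (0 : ℝ), ∃ η > (0 : ℝ), ∀ u v : X, dist (θ u) (θ v) ≤ η → dist u v ≤ ε := by
  intro ε hε
  let h := hθ.toHomeomorph
  haveI : CompactSpace (Set.range θ) :=
    isCompact_iff_compactSpace.mp (isCompact_range hθ.continuous)
  have hu : UniformContinuous (h.symm : Set.range θ → X) :=
    CompactSpace.uniformContinuous_of_continuous h.symm.continuous
  rw [Metric.uniformContinuous_iff] at hu
  obtain ⟨δ, hδ, H⟩ := hu ε hε
  refine ⟨δ / 2, by positivity, fun u v huv => ?_⟩
  have h1 : dist (⟨θ u, Set.mem_range_self u⟩ : Set.range θ)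
      (⟨θ v, Set.mem_range_self v⟩ : Set.range θ) < δ := by
    rw [Subtype.dist_eq]
    exact lt_of_le_of_lt huv (by linarith)
  have h2 := H h1
  have e1 : h.symm ⟨θ u, Set.mem_range_self u⟩ = u := by
    have : h u = ⟨θ u, Set.mem_range_self u⟩ := Subtype.ext rfl
    rw [← this, Homeomorph.symm_apply_apply]
  have e2 : h.symm ⟨θ v, Set.mem_range_self v⟩ = v := by
    have : h v = ⟨θ v, Set.mem_range_self v⟩ := Subtype.ext rfl
    rw [← this, Homeomorph.symm_apply_apply]
  rw [e1, e2] at h2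
  exact h2.le

/-- A compactum `X` (a nonempty compact metrizable space) is an *approximative absolute
neighborhood retract* (AANR) if for every compact metric space `Y`, every topological
embedding `θ : X → Y`, and every `ε > 0`, there exist `δ > 0` and a continuous map
`r : U_δ → X` (where `U_δ = {y | dist (y, θ(X)) ≤ δ}`) moving the points of `θ(X)`
by at most `ε`, i.e. `d (θ (r (θ x))) (θ x) ≤ ε` for all `x ∈ X` (identifying `X`
with `θ(X)`). -/
def IsAANR (X : Type u) [TopologicalSpace X] : Prop :=
  ∀ (Y : Type v) [MetricSpace Y] [CompactSpace Y] (θ : X → Y),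
    IsEmbedding θ →
    ∀ ε > (0 : ℝ), ∃ δ > (0 : ℝ), ∃ r : Y → X,
      ContinuousOn r {y | Metric.infDist y (Set.range θ) ≤ δ} ∧
      ∀ x : X, dist (θ (r (θ x))) (θ x) ≤ ε

/-- Being an AANR does not depend on the universe in which the ambient compact metric
spaces are taken: this follows from the Kuratowski embedding into `ℓ^∞(ℕ)`. -/
lemma isAANR_univ {X : Type u} [TopologicalSpace X]
    (h : IsAANR.{u, v} X) : IsAANR.{u, w} X := by
  intro Y _ _ θ hθ ε hε
  haveI : TopologicalSpace.SeparableSpace Y := inferInstance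
  let κ := kuratowskiEmbedding Y
  have hκ : Isometry κ := kuratowskiEmbedding.isometry Y
  let K : Set (lp (fun _ : ℕ => ℝ) ⊤) := Set.range κ
  haveI : CompactSpace K :=
    isCompact_iff_compactSpace.mp (isCompact_range hκ.continuous)
  let Z := ULift.{v} K
  haveI : CompactSpace Z := Homeomorph.compactSpace (X := K) Homeomorph.ulift.symm
  let e : Y → Z := fun y => ULift.up ⟨κ y, Set.mem_range_self y⟩
  have he : Isometry e := Isometry.of_dist_eq fun a b => hκ.dist_eq a b
  obtain ⟨δ, hδ, r, hrc, hrd⟩ := h Z (e ∘ θ) (he.isEmbedding.comp hθ) ε hε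
  refine ⟨δ, hδ, r ∘ e, ?_, ?_⟩
  · refine ContinuousOn.comp hrc he.continuous.continuousOn ?_
    intro y hy
    simp only [Set.mem_setOf_eq] at hy ⊢
    rw [Set.range_comp, Metric.infDist_image he]
    exact hy
  · intro x
    have h3 := hrd x
    simp only [Function.comp_apply] at h3 ⊢
    rwa [he.dist_eq] at h3

/-- Auxiliary monotone enlargement of a sequence of indices. -/
def aanrAuxN (N0 : ℕ → ℕ) : ℕ → ℕ
  | 0 => N0 0
  | (k + 1) => max (N0 (k + 1)) (aanrAuxN N0 k + 1)

/-- A compactum `X` is an AANR if and only if: for every compactum `Y`, every topological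
embedding `θ : X → Y`, and every decreasing sequence `Y₁ ⊇ Y₂ ⊇ ⋯` of closed subsets of
`Y` with `⋂ n, Yₙ = θ(X)`, there is a sequence of continuous maps `rₙ : Yₙ → X` with
`rₙ (θ x) → x` uniformly over `x ∈ X`.  (Uniform convergence is expressed via a chosen
compatible metric on `X`.) -/
theorem aanr_iff_approximate_retractions_onto_decreasing_closed_sets
    (X : Type u) [MetricSpace X] [CompactSpace X] [Nonempty X] :
    IsAANR X ↔
      ∀ (Y : Type v) [TopologicalSpace Y] [CompactSpace Y]
        [TopologicalSpace.MetrizableSpace Y] [Nonempty Y] (θ : X → Y),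
        IsEmbedding θ →
        ∀ Yn : ℕ → Set Y, (∀ n, IsClosed (Yn n)) → (∀ n, Yn (n + 1) ⊆ Yn n) →
          (⋂ n, Yn n) = Set.range θ →
          ∃ r : ℕ → Y → X,
            (∀ n, ContinuousOn (r n) (Yn n)) ∧
            ∀ ε > (0 : ℝ), ∃ N : ℕ, ∀ n ≥ N, ∀ x : X, dist (r n (θ x)) x ≤ ε := by
  constructor
  · -- forward direction
    intro hA₀ Y _ _ _ _ θ hθ Yn hYc hYd hYi
    classical
    have hA : IsAANR.{u, v} X := isAANR_univ hA₀
    letI : MetricSpace Y := TopologicalSpace.metrizableSpaceMetric Y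
    have hAY := hA Y θ hθ
    choose δ hδ ρ hρc hρd using fun k : ℕ => hAY (1 / ((k : ℝ) + 1)) (by positivity)
    have hanti : Antitone Yn := antitone_nat_of_succ_le hYd
    have shrink : ∀ d > (0 : ℝ), ∃ N, ∀ n ≥ N, ∀ y ∈ Yn n,
        Metric.infDist y (Set.range θ) ≤ d := by
      intro d hd
      by_contra hcon
      push_neg at hcon
      set K : ℕ → Set Y := fun n => Yn n ∩ {y | d ≤ Metric.infDist y (Set.range θ)} with hK
      have hKc : ∀ n, IsClosed (K n) := fun n =>
        (hYc n).inter (isClosed_le continuous_const (Metric.continuous_infDist_pt _))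
      have hKn : ∀ n, (K n).Nonempty := by
        intro n
        obtain ⟨m, hm, y, hy, hyd⟩ := hcon n
        exact ⟨y, hanti hm hy, hyd.le⟩
      have hne := IsCompact.nonempty_iInter_of_sequence_nonempty_isCompact_isClosed K
        (fun i => Set.inter_subset_inter_left _ (hYd i)) hKn ((hKc 0).isCompact) hKc
      obtain ⟨y, hy⟩ := hne
      simp only [Set.mem_iInter] at hy
      have hyr : y ∈ Set.range θ := by
        rw [← hYi]; exact Set.mem_iInter.2 fun n => (hy n).1
      have h0 : Metric.infDist y (Set.range θ) = 0 := Metric.infDist_zero_of_mem hyr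
      have := (hy 0).2
      rw [Set.mem_setOf_eq, h0] at this
      linarith
    choose N0 hN0 using fun k => shrink (δ k) (hδ k)
    set N : ℕ → ℕ := aanrAuxN N0 with hNdef
    have hNk : ∀ k, N0 k ≤ N k := by
      intro k
      cases k with
      | zero => exact le_rfl
      | succ m => exact le_max_left _ _
    have hNmono : StrictMono N := by
      apply strictMono_nat_of_lt_succ
      intro k
      exact lt_of_lt_of_le (Nat.lt_succ_self _) (le_max_right _ _)
    let x0 : X := Classical.arbitrary X
    let c : ℕ → ℕ := fun n => Nat.findGreatest (fun k => N k ≤ n) n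
    refine ⟨fun n => if _ : N 0 ≤ n then ρ (c n) else fun _ => x0, ?_, ?_⟩
    · intro n
      by_cases hn : N 0 ≤ n
      · beta_reduce
        rw [dif_pos hn]
        have h1 : N (c n) ≤ n := Nat.findGreatest_spec (P := fun k => N k ≤ n) (Nat.zero_le n) hn
        refine (hρc (c n)).mono fun y hy => ?_
        exact hN0 (c n) n (le_trans (hNk (c n)) h1) y hy
      · beta_reduce
        rw [dif_neg hn]
        exact continuousOn_const
    · intro ε hε
      obtain ⟨η, hη, hinv⟩ := aanr_aux_inv θ hθ ε hε
      obtain ⟨K, hK⟩ := exists_nat_one_div_lt hη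
      refine ⟨N K, fun n hn x => ?_⟩
      have hn0 : N 0 ≤ n := le_trans (hNmono.monotone (Nat.zero_le K)) hn
      have hcK : K ≤ c n := Nat.le_findGreatest (P := fun k => N k ≤ n) (le_trans hNmono.le_apply hn) hn
      have hb := hρd (c n) x
      have hle : (1 : ℝ) / ((c n : ℝ) + 1) ≤ 1 / ((K : ℝ) + 1) := by
        apply one_div_le_one_div_of_le (by positivity)
        exact_mod_cast Nat.succ_le_succ hcK
      beta_reduce
      rw [dif_pos hn0]
      exact hinv _ _ (le_trans hb (le_trans hle hK.le))
  · -- backward direction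
    intro H
    refine isAANR_univ ?_
    intro Y _ _ θ hθ ε hε
    haveI : Nonempty Y := ⟨θ (Classical.arbitrary X)⟩
    set Yn : ℕ → Set Y := fun n => {y | Metric.infDist y (Set.range θ) ≤ 1 / ((n : ℝ) + 1)}
      with hYn
    have hclosed : ∀ n, IsClosed (Yn n) := fun n =>
      isClosed_le (Metric.continuous_infDist_pt _) continuous_const
    have hdec : ∀ n, Yn (n + 1) ⊆ Yn n := by
      intro n y hy
      simp only [hYn, Set.mem_setOf_eq] at hy ⊢
      refine le_trans hy ?_
      apply one_div_le_one_div_of_le (by positivity)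
      push_cast
      linarith
    have hrange_closed : IsClosed (Set.range θ) := (isCompact_range hθ.continuous).isClosed
    have hint : (⋂ n, Yn n) = Set.range θ := by
      ext y
      simp only [Set.mem_iInter, hYn, Set.mem_setOf_eq]
      constructor
      · intro h
        have h0 : Metric.infDist y (Set.range θ) ≤ 0 := by
          by_contra hc
          push_neg at hc
          obtain ⟨n, hn⟩ := exists_nat_one_div_lt hc
          have := h n
          linarith
        have h0' : Metric.infDist y (Set.range θ) = 0 :=
          le_antisymm h0 Metric.infDist_nonneg
        exact (hrange_closed.mem_iff_infDist_zero (Set.range_nonempty θ)).2 h0'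
      · intro hy n
        rw [Metric.infDist_zero_of_mem hy]
        positivity
    obtain ⟨r, hrc, hconv⟩ := H Y θ hθ Yn hclosed hdec hint
    have hu : UniformContinuous θ := CompactSpace.uniformContinuous_of_continuous hθ.continuous
    rw [Metric.uniformContinuous_iff] at hu
    obtain ⟨d, hd, hdd⟩ := hu ε hε
    obtain ⟨M, hM⟩ := hconv (d / 2) (by positivity)
    refine ⟨1 / ((M : ℝ) + 1), by positivity, r M, ?_, ?_⟩
    · exact hrc M
    · intro x
      have h1 := hM M le_rfl x
      have h2 : dist (r M (θ x)) x < d := lt_of_le_of_lt h1 (by linarith)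
      exact (hdd h2).le
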